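/- Let σ > 0, μ_0 < r < μ_1, λ_0 > 0, ω := (μ_1−μ_0)/σ, let γ ∈ (0,1) be the unique positive root of (ω²/2)·γ·(γ−1) + (λ_0+μ_1−μ_0)·γ − (r+λ_0−μ_0) = 0, and set B := γ(r−μ_0)(μ_1−r) / ((1−γ)(r+λ_0−μ_0)(λ_0+μ_1−r)). Define v̄ : (0,∞) → ℝ by v̄(φ) = (r−μ_0)/((1−γ)(r+λ_0−μ_0)) · (φ/B)^γ − (λ_0/(μ_1−r))·φ + λ_0/(r+λ_0−μ_0) for φ ∈ (0,B), and v̄(φ) = 1 + φ for φ ≥ B. Then B > 0, v̄ satisfies (ω²φ²/2)·v̄''(φ) + (λ_0+μ_1−μ_0)·φ·v̄'(φ) − (r+λ_0−μ_0)·v̄(φ) + λ_0·(1+φ) = 0 for all φ ∈ (0,B), and v̄ is continuously differentiable on (0,∞) with v̄(B) = 1 + B and v̄'(B) = 1. -/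

import Mathlib

open Set

/-- The explicit solution of the free-boundary problem for the short-position-closing
example: positivity of the boundary `B`, the ODE on `(0,B)`, `C¹`-regularity, value
matching and smooth fit at `B`. Here `l₀` plays the role of the recall rate `λ₀`. -/
theorem stmt_14 (σ μ₀ μ₁ r l₀ ω γ B : ℝ)
    (hσ : 0 < σ) (hμ₀ : μ₀ < r) (hμ₁ : r < μ₁) (hl₀ : 0 < l₀)
    (hω : ω = (μ₁ - μ₀) / σ)
    (hγ : γ ∈ Ioo (0 : ℝ) 1)
    (hquad : ω ^ 2 / 2 * γ * (γ - 1) + (l₀ + μ₁ - μ₀) * γ - (r + l₀ - μ₀) = 0)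
    (hB : B = γ * (r - μ₀) * (μ₁ - r) / ((1 - γ) * (r + l₀ - μ₀) * (l₀ + μ₁ - r)))
    (v : ℝ → ℝ)
    (hv : ∀ φ : ℝ, v φ =
      if φ < B then
        (r - μ₀) / ((1 - γ) * (r + l₀ - μ₀)) * (φ / B) ^ γ - l₀ / (μ₁ - r) * φ
          + l₀ / (r + l₀ - μ₀)
      else 1 + φ) :
    0 < B ∧
    (∀ φ ∈ Ioo (0 : ℝ) B,
      ω ^ 2 * φ ^ 2 / 2 * deriv (deriv v) φ + (l₀ + μ₁ - μ₀) * φ * deriv v φ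
        - (r + l₀ - μ₀) * v φ + l₀ * (1 + φ) = 0) ∧
    ContDiffOn ℝ 1 v (Ioi 0) ∧
    v B = 1 + B ∧
    deriv v B = 1 := by
  obtain ⟨hγ0, hγ1⟩ := hγ
  have h1 : (0:ℝ) < r - μ₀ := by linarith
  have h2 : (0:ℝ) < μ₁ - r := by linarith
  have h3 : (0:ℝ) < r + l₀ - μ₀ := by linarith
  have h4 : (0:ℝ) < l₀ + μ₁ - r := by linarith
  have h5 : (0:ℝ) < 1 - γ := by linarith
  have hBpos : 0 < B := by
    rw [hB]
    apply div_pos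
    · exact mul_pos (mul_pos hγ0 h1) h2
    · exact mul_pos (mul_pos h5 h3) h4
  have hBne : B ≠ 0 := ne_of_gt hBpos
  have h2' : μ₁ - r ≠ 0 := ne_of_gt h2
  have h3' : r + l₀ - μ₀ ≠ 0 := ne_of_gt h3
  have h5' : (1:ℝ) - γ ≠ 0 := ne_of_gt h5
  have h4' : l₀ + μ₁ - r ≠ 0 := ne_of_gt h4
  -- the smooth part on the left of B
  set f : ℝ → ℝ := fun φ =>
    (r - μ₀) / ((1 - γ) * (r + l₀ - μ₀)) * (φ / B) ^ γ - l₀ / (μ₁ - r) * φ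
      + l₀ / (r + l₀ - μ₀) with hf
  set f1 : ℝ → ℝ := fun φ =>
    (r - μ₀) / ((1 - γ) * (r + l₀ - μ₀)) * (1 / B * γ * (φ / B) ^ (γ - 1)) - l₀ / (μ₁ - r)
    with hf1
  set f2 : ℝ → ℝ := fun φ =>
    (r - μ₀) / ((1 - γ) * (r + l₀ - μ₀)) * (1 / B * γ * (1 / B * (γ - 1) * (φ / B) ^ (γ - 1 - 1)))
    with hf2
  -- value matching
  have hfB : f B = 1 + B := by
    simp only [hf, div_self hBne, Real.one_rpow]
    rw [hB]
    field_simp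
    ring
  have hvB : v B = 1 + B := by rw [hv B, if_neg (lt_irrefl B)]
  -- f1 at B is 1
  have hf1B : f1 B = 1 := by
    simp only [hf1, div_self hBne, Real.one_rpow]
    rw [hB]
    field_simp
    ring
  -- derivative facts for f
  have hdf : ∀ φ : ℝ, φ ≠ 0 → HasDerivAt f (f1 φ) φ := by
    intro φ hφ
    have hne : φ / B ≠ 0 := div_ne_zero hφ hBne
    have h0 : HasDerivAt (fun x : ℝ => x / B) (1 / B) φ := (hasDerivAt_id φ).div_const B
    have h0' : HasDerivAt (fun x : ℝ => (x / B) ^ γ) (1 / B * γ * (φ / B) ^ (γ - 1)) φ :=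
      h0.rpow_const (Or.inl hne)
    have h := ((h0'.const_mul ((r - μ₀) / ((1 - γ) * (r + l₀ - μ₀)))).sub
      ((hasDerivAt_id φ).const_mul (l₀ / (μ₁ - r)))).add_const (l₀ / (r + l₀ - μ₀))
    exact h.congr_deriv (by simp only [hf1]; ring)
  have hdf1 : ∀ φ : ℝ, φ ≠ 0 → HasDerivAt f1 (f2 φ) φ := by
    intro φ hφ
    have hne : φ / B ≠ 0 := div_ne_zero hφ hBne
    have h0 : HasDerivAt (fun x : ℝ => x / B) (1 / B) φ := (hasDerivAt_id φ).div_const B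
    have h0' : HasDerivAt (fun x : ℝ => (x / B) ^ (γ - 1))
        (1 / B * (γ - 1) * (φ / B) ^ (γ - 1 - 1)) φ := h0.rpow_const (Or.inl hne)
    have ha : HasDerivAt (fun x : ℝ => 1 / B * γ * (x / B) ^ (γ - 1))
        (1 / B * γ * (1 / B * (γ - 1) * (φ / B) ^ (γ - 1 - 1))) φ :=
      h0'.const_mul (1 / B * γ)
    exact (ha.const_mul ((r - μ₀) / ((1 - γ) * (r + l₀ - μ₀)))).sub_const (l₀ / (μ₁ - r))
  -- v agrees with f on Iic B
  have hvf : ∀ φ ∈ Iic B, v φ = f φ := by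
    intro φ hφ
    rcases lt_or_eq_of_le (mem_Iic.mp hφ) with h | h
    · rw [hv φ, if_pos h]
    · subst h; rw [hvB, hfB]
  -- v agrees with f near any point of Ioo 0 B
  have hev : ∀ φ ∈ Ioo (0:ℝ) B, v =ᶠ[nhds φ] f := by
    intro φ hφ
    filter_upwards [Iio_mem_nhds hφ.2] with x hx
    rw [hv x, if_pos (show x < B from hx)]
  -- derivative of v inside (0, B)
  have hdv : ∀ φ ∈ Ioo (0:ℝ) B, HasDerivAt v (f1 φ) φ := by
    intro φ hφ
    exact (hdf φ (ne_of_gt hφ.1)).congr_of_eventuallyEq (hev φ hφ)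
  have hdvder : ∀ φ ∈ Ioo (0:ℝ) B, deriv v φ = f1 φ := fun φ hφ => (hdv φ hφ).deriv
  -- second derivative inside (0, B)
  have hdv2 : ∀ φ ∈ Ioo (0:ℝ) B, deriv (deriv v) φ = f2 φ := by
    intro φ hφ
    have hevd : deriv v =ᶠ[nhds φ] f1 := by
      filter_upwards [(isOpen_Ioo).mem_nhds hφ] with x hx
      exact hdvder x hx
    rw [Filter.EventuallyEq.deriv_eq hevd]
    exact (hdf1 φ (ne_of_gt hφ.1)).deriv
  -- v = 1 + φ on Ici B
  have hvg : ∀ φ ∈ Ici B, v φ = 1 + φ := by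
    intro φ hφ
    rw [hv φ, if_neg (not_lt.mpr (mem_Ici.mp hφ))]
  -- smooth fit: HasDerivAt v 1 B
  have hdvB : HasDerivAt v 1 B := by
    have hleft : HasDerivWithinAt v 1 (Iic B) B := by
      have h := (hdf B hBne).hasDerivWithinAt (s := Iic B)
      rw [hf1B] at h
      exact h.congr hvf (hvf B (mem_Iic.mpr le_rfl))
    have hright : HasDerivWithinAt v 1 (Ici B) B := by
      have h : HasDerivAt (fun x : ℝ => 1 + x) 1 B := by
        simpa using (hasDerivAt_id B).const_add (1:ℝ)
      exact (h.hasDerivWithinAt (s := Ici B)).congr hvg (hvg B (mem_Ici.mpr le_rfl))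
    have h := hleft.union hright
    rw [Iic_union_Ici] at h
    exact hasDerivWithinAt_univ.mp h
  -- derivative of v above B
  have hdvabove : ∀ φ ∈ Ioi B, HasDerivAt v 1 φ := by
    intro φ hφ
    have hg : HasDerivAt (fun x : ℝ => 1 + x) 1 φ := by
      simpa using (hasDerivAt_id φ).const_add (1:ℝ)
    apply hg.congr_of_eventuallyEq
    filter_upwards [Ioi_mem_nhds hφ] with x hx
    exact hvg x (mem_Ici.mpr (le_of_lt hx))
  -- the ODE
  have hode : ∀ φ ∈ Ioo (0 : ℝ) B,
      ω ^ 2 * φ ^ 2 / 2 * deriv (deriv v) φ + (l₀ + μ₁ - μ₀) * φ * deriv v φ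
        - (r + l₀ - μ₀) * v φ + l₀ * (1 + φ) = 0 := by
    intro φ hφ
    rw [hdv2 φ hφ, hdvder φ hφ, hv φ, if_pos hφ.2]
    have hxpos : 0 < φ / B := div_pos hφ.1 hBpos
    have eγ1 : (φ / B) ^ (γ - 1) = (φ / B) ^ (γ - 1 - 1) * (φ / B) := by
      have h : γ - 1 - 1 + 1 = γ - 1 := by ring
      calc (φ / B) ^ (γ - 1) = (φ / B) ^ (γ - 1 - 1 + 1) := by rw [h]
        _ = (φ / B) ^ (γ - 1 - 1) * (φ / B) ^ (1:ℝ) := Real.rpow_add hxpos _ _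
        _ = (φ / B) ^ (γ - 1 - 1) * (φ / B) := by rw [Real.rpow_one]
    have eγ : (φ / B) ^ γ = (φ / B) ^ (γ - 1 - 1) * (φ / B) ^ (2:ℕ) := by
      have h : γ - 1 - 1 + 2 = γ := by ring
      calc (φ / B) ^ γ = (φ / B) ^ (γ - 1 - 1 + 2) := by rw [h]
        _ = (φ / B) ^ (γ - 1 - 1) * (φ / B) ^ (2:ℝ) := Real.rpow_add hxpos _ _
        _ = (φ / B) ^ (γ - 1 - 1) * (φ / B) ^ (2:ℕ) := by
            rw [show (2:ℝ) = ((2:ℕ):ℝ) by norm_num, Real.rpow_natCast]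
    show ω ^ 2 * φ ^ 2 / 2 *
        ((r - μ₀) / ((1 - γ) * (r + l₀ - μ₀)) *
          (1 / B * γ * (1 / B * (γ - 1) * (φ / B) ^ (γ - 1 - 1))))
      + (l₀ + μ₁ - μ₀) * φ *
        ((r - μ₀) / ((1 - γ) * (r + l₀ - μ₀)) * (1 / B * γ * (φ / B) ^ (γ - 1)) - l₀ / (μ₁ - r))
      - (r + l₀ - μ₀) *
        ((r - μ₀) / ((1 - γ) * (r + l₀ - μ₀)) * (φ / B) ^ γ - l₀ / (μ₁ - r) * φ
          + l₀ / (r + l₀ - μ₀))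
      + l₀ * (1 + φ) = 0
    rw [eγ, eγ1]
    have hi2 : (μ₁ - r)⁻¹ * (μ₁ - r) = 1 := inv_mul_cancel₀ h2'
    have hi3 : (r + l₀ - μ₀)⁻¹ * (r + l₀ - μ₀) = 1 := inv_mul_cancel₀ h3'
    linear_combination ((r - μ₀) * ((1 - γ) * (r + l₀ - μ₀))⁻¹ *
        ((φ / B) ^ (γ - 1 - 1)) * φ ^ 2 * B⁻¹ * B⁻¹) * hquad
      - l₀ * φ * hi2 - l₀ * hi3
  -- C¹ regularity
  have hdiff : DifferentiableOn ℝ v (Ioi 0) := by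
    intro φ hφ
    rcases lt_trichotomy φ B with h | h | h
    · exact (hdv φ ⟨hφ, h⟩).differentiableAt.differentiableWithinAt
    · rw [h]; exact hdvB.differentiableAt.differentiableWithinAt
    · exact (hdvabove φ h).differentiableAt.differentiableWithinAt
  have hderiv_eq : ∀ φ ∈ Ioi (0:ℝ), deriv v φ = if φ < B then f1 φ else 1 := by
    intro φ hφ
    rcases lt_trichotomy φ B with h | h | h
    · rw [if_pos h]; exact hdvder φ ⟨hφ, h⟩
    · rw [h, if_neg (lt_irrefl B)]; exact hdvB.deriv
    · rw [if_neg (not_lt.mpr (le_of_lt h))]; exact (hdvabove φ h).deriv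
  have hcont : ContinuousOn (deriv v) (Ioi 0) := by
    have hw : ContinuousOn (fun φ => if φ < B then f1 φ else (1:ℝ)) (Ioi 0) := by
      apply ContinuousOn.if
      · intro a ha
        have haB : a = B := by
          have h := ha.2
          rw [show {a : ℝ | a < B} = Iio B from rfl, frontier_Iio] at h
          simpa using h
        rw [haB, hf1B]
      · intro a ha
        have ha0 : a ≠ 0 := ne_of_gt ha.1
        have h0 : ContinuousAt (fun x : ℝ => (x / B) ^ (γ - 1)) a :=
          (continuousAt_id.div_const B).rpow_const (Or.inl (div_ne_zero ha0 hBne))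
        have h1' : ContinuousAt f1 a := by
          simp only [hf1]
          exact (continuousAt_const.mul (continuousAt_const.mul h0)).sub continuousAt_const
        exact h1'.continuousWithinAt
      · exact continuousOn_const
    exact hw.congr hderiv_eq
  have hC1 : ContDiffOn ℝ 1 v (Ioi 0) := by
    rw [show (1 : WithTop ℕ∞) = 0 + 1 from (zero_add 1).symm,
      contDiffOn_succ_iff_deriv_of_isOpen isOpen_Ioi]
    refine ⟨hdiff, by simp, ?_⟩
    rw [contDiffOn_zero]
    exact hcont
  exact ⟨hBpos, hode, hC1, hvB, hdvB.deriv⟩
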